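/- The listed bracket relations on the basis e_1,…,e_16 of ℝ^16, extended bilinearly and antisymmetrically (with all unlisted brackets of basis elements equal to zero), satisfy the Jacobi identity and hence define a real Lie algebra 𝔤; moreover 𝔤 = V_1 ⊕ V_2 is a stratification of step 2, i.e. [V_1, V_1] = V_2 and [V_2, 𝔤] = 0. -/

import Mathlib

open Module

/-- The listed bracket relations: `(i, j, k, a)` means `[e_i, e_j] = a • e_k`
(1-based indices). -/
def relList : List (ℕ × ℕ × ℕ × ℝ) :=
  [(1,2,11,1), (1,3,13,1), (1,4,14,1), (1,5,15,1), (1,6,16,1),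
   (2,3,13,1), (2,5,12,1), (2,6,14,1),
   (3,5,12,1), (3,6,13,1), (3,7,14,1),
   (4,5,12,1), (4,6,13,1), (4,8,14,1),
   (5,6,13,1), (5,8,12,1), (5,9,14,1),
   (6,8,12,1), (6,9,13,1), (6,10,14,1),
   (7,8,14,1), (7,9,12,1), (7,10,13,1),
   (8,9,13,1), (8,10,14,1), (9,10,12,-1)]

/-- Structure constants determined by a relation list, extended antisymmetrically:
`sc rels i j k` is the coefficient of `e_k` in `[e_i, e_j]` (1-based indices). -/
noncomputable def sc (rels : List (ℕ × ℕ × ℕ × ℝ)) (i j k : ℕ) : ℝ :=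
  ((rels.filter (fun r => r.1 = i ∧ r.2.1 = j ∧ r.2.2.1 = k)).map (fun r => r.2.2.2)).sum
  - ((rels.filter (fun r => r.1 = j ∧ r.2.1 = i ∧ r.2.2.1 = k)).map (fun r => r.2.2.2)).sum

/-- The bilinear bracket on `ℝ^n` determined by the structure constants `sc rels`. -/
noncomputable def bra {n : ℕ} (rels : List (ℕ × ℕ × ℕ × ℝ)) (x y : Fin n → ℝ) :
    Fin n → ℝ :=
  fun k => ∑ i, ∑ j, x i * y j * sc rels (i.val + 1) (j.val + 1) (k.val + 1)

/-- `e i` is the `i`-th standard basis vector of `ℝ^n` (1-based index). -/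
noncomputable def e {n : ℕ} (i : ℕ) : Fin n → ℝ := fun k => if k.val + 1 = i then 1 else 0

/-- The span of all brackets `bra rels x y` with `x ∈ A` and `y ∈ B`. -/
noncomputable def braSpan {n : ℕ} (rels : List (ℕ × ℕ × ℕ × ℝ))
    (A B : Submodule ℝ (Fin n → ℝ)) : Submodule ℝ (Fin n → ℝ) :=
  Submodule.span ℝ {z | ∃ x ∈ A, ∃ y ∈ B, bra rels x y = z}

/-- The strata `V_1 = span{e_1, …, e_10}` and `V_2 = span{e_11, …, e_16}`. -/
noncomputable def V1 : Submodule ℝ (Fin 16 → ℝ) := Submodule.span ℝ (e '' {i | 1 ≤ i ∧ i ≤ 10})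
noncomputable def V2 : Submodule ℝ (Fin 16 → ℝ) := Submodule.span ℝ (e '' {i | 11 ≤ i ∧ i ≤ 16})

lemma sc_zero (a b c : ℕ) (h : 11 ≤ a ∨ 11 ≤ b ∨ c ≤ 10) : sc relList a b c = 0 := by
  unfold sc
  rw [List.filter_eq_nil_iff.mpr, List.filter_eq_nil_iff.mpr]
  · simp
  · intro r hr; fin_cases hr <;> simp <;> omega
  · intro r hr; fin_cases hr <;> simp <;> omega

lemma sc_antisymm (a b c : ℕ) : sc relList a b c = - sc relList b a c := by
  unfold sc; ring

lemma bra_antisymm (x y : Fin 16 → ℝ) : bra relList x y = - bra relList y x := by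
  funext k
  simp only [bra, Pi.neg_apply, ← Finset.sum_neg_distrib]
  rw [Finset.sum_comm]
  congr 1; funext i; congr 1; funext j
  rw [sc_antisymm]; ring

lemma bra_low (x y : Fin 16 → ℝ) (k : Fin 16) (hk : k.val ≤ 9) : bra relList x y k = 0 := by
  simp only [bra]
  apply Finset.sum_eq_zero; intro i _
  apply Finset.sum_eq_zero; intro j _
  rw [sc_zero _ _ _ (by omega)]; ring

lemma bra_right_high (x y : Fin 16 → ℝ) (hy : ∀ j : Fin 16, j.val ≤ 9 → y j = 0) :
    bra relList x y = 0 := by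
  funext k
  simp only [bra, Pi.zero_apply]
  apply Finset.sum_eq_zero; intro i _
  apply Finset.sum_eq_zero; intro j _
  rcases le_or_gt j.val 9 with hj | hj
  · rw [hy j hj]; ring
  · rw [sc_zero _ _ _ (by omega)]; ring

lemma bra_bra (x y z : Fin 16 → ℝ) : bra relList x (bra relList y z) = 0 :=
  bra_right_high _ _ (bra_low y z)

lemma bra_left_high (x y : Fin 16 → ℝ) (hx : ∀ i : Fin 16, i.val ≤ 9 → x i = 0) :
    bra relList x y = 0 := by
  funext k
  simp only [bra, Pi.zero_apply]
  apply Finset.sum_eq_zero; intro i _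
  apply Finset.sum_eq_zero; intro j _
  rcases le_or_gt i.val 9 with hi | hi
  · rw [hx i hi]; ring
  · rw [sc_zero _ _ _ (by omega)]; ring

lemma sum_indicator (a : ℕ) (h1 : 1 ≤ a) (h2 : a ≤ 16) (g : Fin 16 → ℝ) :
    ∑ i : Fin 16, (if i.val + 1 = a then (1:ℝ) else 0) * g i = g ⟨a-1, by omega⟩ := by
  rw [Finset.sum_eq_single (⟨a-1, by omega⟩ : Fin 16)]
  · simp [Nat.sub_add_cancel h1]
  · intro i _ hne
    have h : ¬(i.val + 1 = a) := fun h => hne (Fin.ext (by simp; omega))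
    simp [h]
  · simp

lemma bra_e (a b : ℕ) (ha : 1 ≤ a) (ha' : a ≤ 16) (hb : 1 ≤ b) (hb' : b ≤ 16) :
    bra relList (e a) (e b) = fun k : Fin 16 => sc relList a b (k.val + 1) := by
  funext k
  simp only [bra, e]
  have step : ∀ i : Fin 16,
      ∑ j : Fin 16, (if i.val + 1 = a then (1:ℝ) else 0) * (if j.val + 1 = b then (1:ℝ) else 0)
        * sc relList (i.val+1) (j.val+1) (k.val+1)
      = (if i.val + 1 = a then (1:ℝ) else 0) *
        ∑ j : Fin 16, (if j.val + 1 = b then (1:ℝ) else 0) * sc relList (i.val+1) (j.val+1) (k.val+1) := by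
    intro i; rw [Finset.mul_sum]; congr 1; funext j; ring
  rw [Finset.sum_congr rfl (fun i _ => step i), sum_indicator a ha ha', sum_indicator b hb hb']
  simp [Nat.sub_add_cancel ha, Nat.sub_add_cancel hb]

lemma e_eq (i : Fin 16) : (e (i.val + 1) : Fin 16 → ℝ) = fun j => if i = j then 1 else 0 := by
  funext j
  by_cases h : i = j
  · subst h; simp [e]
  · have : ¬(j.val + 1 = i.val + 1) := fun hh => h (Fin.ext (by omega))
    simp [e, this, h]; omega

lemma mem_V1 (x : Fin 16 → ℝ) (hx : ∀ i : Fin 16, 10 ≤ i.val → x i = 0) : x ∈ V1 := by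
  rw [pi_eq_sum_univ x]
  apply Submodule.sum_mem
  intro i _
  rcases le_or_gt 10 i.val with hi | hi
  · rw [hx i hi]; simp
  · exact Submodule.smul_mem _ _ (Submodule.subset_span ⟨i.val + 1, ⟨by omega, by omega⟩, (e_eq i)⟩)

lemma mem_V2 (x : Fin 16 → ℝ) (hx : ∀ i : Fin 16, i.val ≤ 9 → x i = 0) : x ∈ V2 := by
  rw [pi_eq_sum_univ x]
  apply Submodule.sum_mem
  intro i _
  rcases le_or_gt i.val 9 with hi | hi
  · rw [hx i hi]; simp
  · exact Submodule.smul_mem _ _ (Submodule.subset_span ⟨i.val + 1, ⟨by omega, by omega⟩, (e_eq i)⟩)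

lemma V1_support : ∀ x ∈ V1, ∀ i : Fin 16, 10 ≤ i.val → x i = 0 := by
  intro x hx
  induction hx using Submodule.span_induction with
  | mem z hz => rcases hz with ⟨m, ⟨h1, h2⟩, rfl⟩; intro i hi; simp only [e]; rw [if_neg]; omega
  | zero => simp
  | add a b _ _ ha hb => intro i hi; simp [ha i hi, hb i hi]
  | smul r a _ ha => intro i hi; simp [ha i hi]

lemma V2_support : ∀ x ∈ V2, ∀ i : Fin 16, i.val ≤ 9 → x i = 0 := by
  intro x hx
  induction hx using Submodule.span_induction with
  | mem z hz => rcases hz with ⟨m, ⟨h1, h2⟩, rfl⟩; intro i hi; simp only [e]; rw [if_neg]; omega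
  | zero => simp
  | add a b _ _ ha hb => intro i hi; simp [ha i hi, hb i hi]
  | smul r a _ ha => intro i hi; simp [ha i hi]

lemma e_mem_V1 (a : ℕ) (h1 : 1 ≤ a) (h2 : a ≤ 10) : (e a : Fin 16 → ℝ) ∈ V1 :=
  Submodule.subset_span ⟨a, ⟨h1, h2⟩, rfl⟩

lemma bra_gen (a b m : ℕ) (ha : 1 ≤ a) (ha' : a ≤ 16) (hb : 1 ≤ b) (hb' : b ≤ 16)
    (h : ∀ k : Fin 16, sc relList a b (k.val + 1) = e m k) :
    bra relList (e a) (e b) = (e m : Fin 16 → ℝ) := by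
  rw [bra_e a b ha ha' hb hb']
  funext k
  exact h k

lemma gen11 : bra relList (e 1) (e 2) = (e 11 : Fin 16 → ℝ) := by
  apply bra_gen <;> try norm_num
  intro k; fin_cases k <;> norm_num [sc, relList, e]

lemma gen12 : bra relList (e 2) (e 5) = (e 12 : Fin 16 → ℝ) := by
  apply bra_gen <;> try norm_num
  intro k; fin_cases k <;> norm_num [sc, relList, e]

lemma gen13 : bra relList (e 1) (e 3) = (e 13 : Fin 16 → ℝ) := by
  apply bra_gen <;> try norm_num
  intro k; fin_cases k <;> norm_num [sc, relList, e]

lemma gen14 : bra relList (e 1) (e 4) = (e 14 : Fin 16 → ℝ) := by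
  apply bra_gen <;> try norm_num
  intro k; fin_cases k <;> norm_num [sc, relList, e]

lemma gen15 : bra relList (e 1) (e 5) = (e 15 : Fin 16 → ℝ) := by
  apply bra_gen <;> try norm_num
  intro k; fin_cases k <;> norm_num [sc, relList, e]

lemma gen16 : bra relList (e 1) (e 6) = (e 16 : Fin 16 → ℝ) := by
  apply bra_gen <;> try norm_num
  intro k; fin_cases k <;> norm_num [sc, relList, e]

lemma sup_eq : V1 ⊔ V2 = ⊤ := by
  rw [eq_top_iff]
  intro x _
  rw [Submodule.mem_sup]
  refine ⟨fun i => if i.val ≤ 9 then x i else 0, mem_V1 _ (by intro i hi; simp; omega),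
          fun i => if i.val ≤ 9 then 0 else x i, mem_V2 _ (by intro i hi; simp [hi]), ?_⟩
  funext i
  by_cases h : i.val ≤ 9 <;> simp [h]

lemma inf_eq : V1 ⊓ V2 = ⊥ := by
  rw [eq_bot_iff]
  intro x hx
  rw [Submodule.mem_bot]
  funext i
  rcases le_or_gt i.val 9 with hi | hi
  · exact V2_support x hx.2 i hi
  · exact V1_support x hx.1 i (by omega)

lemma V2_ne_bot : V2 ≠ ⊥ := by
  intro h
  have h11 : (e 11 : Fin 16 → ℝ) ∈ V2 := Submodule.subset_span ⟨11, ⟨le_refl _, by norm_num⟩, rfl⟩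
  rw [h, Submodule.mem_bot] at h11
  have := congrFun h11 ⟨10, by norm_num⟩
  simp [e] at this

lemma braSpan_V1 : braSpan relList V1 V1 = V2 := by
  apply le_antisymm
  · rw [braSpan, Submodule.span_le]
    rintro z ⟨x, -, y, -, rfl⟩
    exact mem_V2 _ (fun i hi => bra_low x y i hi)
  · rw [V2, Submodule.span_le]
    rintro z ⟨m, ⟨h1, h2⟩, rfl⟩
    interval_cases m
    · exact Submodule.subset_span ⟨e 1, e_mem_V1 1 (by norm_num) (by norm_num),
        e 2, e_mem_V1 2 (by norm_num) (by norm_num), gen11⟩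
    · exact Submodule.subset_span ⟨e 2, e_mem_V1 2 (by norm_num) (by norm_num),
        e 5, e_mem_V1 5 (by norm_num) (by norm_num), gen12⟩
    · exact Submodule.subset_span ⟨e 1, e_mem_V1 1 (by norm_num) (by norm_num),
        e 3, e_mem_V1 3 (by norm_num) (by norm_num), gen13⟩
    · exact Submodule.subset_span ⟨e 1, e_mem_V1 1 (by norm_num) (by norm_num),
        e 4, e_mem_V1 4 (by norm_num) (by norm_num), gen14⟩
    · exact Submodule.subset_span ⟨e 1, e_mem_V1 1 (by norm_num) (by norm_num),
        e 5, e_mem_V1 5 (by norm_num) (by norm_num), gen15⟩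
    · exact Submodule.subset_span ⟨e 1, e_mem_V1 1 (by norm_num) (by norm_num),
        e 6, e_mem_V1 6 (by norm_num) (by norm_num), gen16⟩

lemma braSpan_V2 : braSpan relList V2 ⊤ = ⊥ := by
  apply le_antisymm _ bot_le
  rw [braSpan, Submodule.span_le]
  rintro z ⟨x, hx, y, -, rfl⟩
  rw [SetLike.mem_coe, Submodule.mem_bot]
  exact bra_left_high x y (V2_support x hx)


/-- The listed bracket relations define a Lie algebra structure on `ℝ^16`
(antisymmetry and the Jacobi identity hold), and `V_1 ⊕ V_2` is a stratification
of step 2: `[V_1, V_1] = V_2` and `[V_2, 𝔤] = 0`. -/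
theorem stmt11 :
    (∀ x y : Fin 16 → ℝ, bra relList x y = - bra relList y x) ∧
    (∀ x y z : Fin 16 → ℝ,
      bra relList x (bra relList y z) + bra relList y (bra relList z x)
        + bra relList z (bra relList x y) = 0) ∧
    V1 ⊔ V2 = ⊤ ∧ V1 ⊓ V2 = ⊥ ∧ V2 ≠ ⊥ ∧
    braSpan relList V1 V1 = V2 ∧ braSpan relList V2 ⊤ = ⊥ := by
  refine ⟨bra_antisymm, ?_, sup_eq, inf_eq, V2_ne_bot, braSpan_V1, braSpan_V2⟩
  intro x y z
  rw [bra_bra, bra_bra, bra_bra]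
  simp
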